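/- Let G be a group, A ≤ H ≤ G, and suppose every G-conjugate of A contained in H is H-conjugate to A, and moreover N_G(A) ≤ N_G(H). Then the map N_H(A) x N_H(A) ↦ H x H from double cosets N_H(A)\N_G(A)/N_H(A) to double cosets H\G/H is injective (onto the set of double cosets HgH with H ∩ H^g containing an H-conjugate of A). -/

import Mathlib

/-- The conjugate subgroup `A^g = g⁻¹ A g`. -/
def conjSub {G : Type*} [Group G] (g : G) (A : Subgroup G) : Subgroup G :=
  A.map (MulAut.conj g⁻¹).toMonoidHom

lemma mem_conjSub {G : Type*} [Group G] {g b : G} {A : Subgroup G} :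
    b ∈ conjSub g A ↔ g * b * g⁻¹ ∈ A := by
  simp only [conjSub, Subgroup.mem_map, MulEquiv.coe_toMonoidHom, MulAut.conj_apply]
  constructor
  · rintro ⟨a, ha, rfl⟩
    group
    simpa using ha
  · intro h
    exact ⟨g * b * g⁻¹, h, by group⟩

lemma conjSub_eq_normalizer {G : Type*} [Group G] {x y : G} {A : Subgroup G}
    (h : conjSub x A = conjSub y A) : x * y⁻¹ ∈ (Subgroup.normalizer (A : Set G)) := by
  rw [Subgroup.mem_normalizer_iff]
  intro a
  have key : ∀ b : G, x * b * x⁻¹ ∈ A ↔ y * b * y⁻¹ ∈ A := by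
    intro b
    rw [← mem_conjSub, ← mem_conjSub, h]
  have := key (y⁻¹ * a * y)
  constructor
  · intro ha
    have : y * (y⁻¹ * a * y) * y⁻¹ ∈ A := by group; simpa using ha
    rw [← key] at this
    convert this using 1; group
  · intro ha
    have : x * (y⁻¹ * a * y) * x⁻¹ ∈ A := by convert ha using 1; group
    rw [key] at this
    have h2 : y * (y⁻¹ * a * y) * y⁻¹ = a := by group
    rwa [h2] at this

/-- Let `A ≤ H ≤ G`.  Suppose every `G`-conjugate of `A` contained in `H` is
`H`-conjugate to `A`, and every element normalizing `A` normalizes `H`.  Then the map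
`N_H(A) g N_H(A) ↦ H g H` from double cosets of `N_H(A)` in `N_G(A)` to double cosets
of `H` in `G` is injective: if `g₁, g₂ ∈ N_G(A)` lie in the same double coset of `H`,
they lie in the same double coset of `N_H(A) = H ⊓ N_G(A)`. -/
theorem double_coset_map_injective (G : Type*) [Group G] (H A : Subgroup G)
    (hAH : A ≤ H)
    (hconj : ∀ g : G, conjSub g A ≤ H → ∃ h ∈ H, conjSub g A = conjSub h A)
    (hnorm : Subgroup.normalizer (A : Set G) ≤ Subgroup.normalizer (H : Set G))
    (g₁ g₂ : G) (hg₁ : g₁ ∈ Subgroup.normalizer (A : Set G)) (hg₂ : g₂ ∈ Subgroup.normalizer (A : Set G))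
    (hHH : ∃ h₁ ∈ H, ∃ h₂ ∈ H, g₂ = h₁ * g₁ * h₂) :
    ∃ m₁ ∈ H ⊓ Subgroup.normalizer (A : Set G), ∃ m₂ ∈ H ⊓ Subgroup.normalizer (A : Set G), g₂ = m₁ * g₁ * m₂ := by
  obtain ⟨h₁, hh₁, h₂, hh₂, rfl⟩ := hHH
  -- conjSub (h₁ * g₁) A ≤ H
  have hle : conjSub (h₁ * g₁) A ≤ H := by
    intro b hb
    rw [mem_conjSub] at hb
    -- b = (h₁ g₁)⁻¹ a (h₁ g₁) where a ∈ A; show b ∈ H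
    -- h₁ * g₁ = (h₁ g₁ h₂) h₂⁻¹ = g₂' h₂⁻¹ ... use normalizer of g₂'
    set a := (h₁ * g₁) * b * (h₁ * g₁)⁻¹ with ha
    have hb' : b = (h₁ * g₁)⁻¹ * a * (h₁ * g₁) := by rw [ha]; group
    -- b = h₂ * ((h₁*g₁*h₂)⁻¹ * a * (h₁*g₁*h₂)) * h₂⁻¹
    have hkey : b = h₂ * ((h₁ * g₁ * h₂)⁻¹ * a * (h₁ * g₁ * h₂)) * h₂⁻¹ := by
      rw [hb']; group
    have hin : (h₁ * g₁ * h₂)⁻¹ * a * (h₁ * g₁ * h₂) ∈ A := by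
      have := (Subgroup.mem_normalizer_iff.mp ((Subgroup.normalizer (A : Set G)).inv_mem hg₂)
        (((h₁ * g₁ * h₂) * a * (h₁ * g₁ * h₂)⁻¹)))
      have h2 := (Subgroup.mem_normalizer_iff.mp hg₂ ((h₁ * g₁ * h₂)⁻¹ * a * (h₁ * g₁ * h₂))).mpr
      apply h2
      convert hb using 1
      group
    rw [hkey]
    exact H.mul_mem (H.mul_mem hh₂ (hAH hin)) (H.inv_mem hh₂)
  obtain ⟨h, hh, heq⟩ := hconj (h₁ * g₁) hle
  have hn : (h₁ * g₁) * h⁻¹ ∈ (Subgroup.normalizer (A : Set G)) := conjSub_eq_normalizer heq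
  -- m₁ := n * g₁⁻¹ = h₁ * (g₁ * h⁻¹ * g₁⁻¹), m₂ := h * h₂
  refine ⟨h₁ * g₁ * h⁻¹ * g₁⁻¹, ⟨?_, ?_⟩, h * h₂, ⟨?_, ?_⟩, by group⟩
  · -- ∈ H : h₁ * (g₁ h⁻¹ g₁⁻¹)
    have : g₁ * h⁻¹ * g₁⁻¹ ∈ H := by
      have := (Subgroup.mem_normalizer_iff.mp (hnorm hg₁) h⁻¹).mp (H.inv_mem hh)
      exact this
    have h2 : h₁ * g₁ * h⁻¹ * g₁⁻¹ = h₁ * (g₁ * h⁻¹ * g₁⁻¹) := by group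
    rw [h2]; exact H.mul_mem hh₁ this
  · exact (Subgroup.normalizer (A : Set G)).mul_mem hn ((Subgroup.normalizer (A : Set G)).inv_mem hg₁)
  · exact H.mul_mem hh hh₂
  · -- h * h₂ = n⁻¹ * g₂ where g₂ = h₁ g₁ h₂
    have h2 : h * h₂ = (h₁ * g₁ * h⁻¹)⁻¹ * (h₁ * g₁ * h₂) := by group
    rw [h2]
    exact (Subgroup.normalizer (A : Set G)).mul_mem ((Subgroup.normalizer (A : Set G)).inv_mem hn) hg₂
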